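/- arXiv:math/0607490 — 3 statements merged into one kernel-verified Lean document; each statement's English description precedes it below -/
import Mathlib

section
/- Let G be a group and π ∈ G with π² = 1. For tuples f = (π, f₁, …, f_i) ∈ G^{i+1} and g = (π, g₁, …, g_j) ∈ G^{j+1}, define the composition f ∘₁ g = (π, f₁g₁, …, f₁g_j, f₂, …, f_i), and more generally f ∘ₖ g inserts (fₖg₁, …, fₖg_j) in place of fₖ. Let τ_m denote the long cycle (0 1 … m) acting by (f.τ_m)ₗ = π f₁⁻¹ f_{l+1} (indices mod m+1, with f₀ = π). Then (f ∘₁ g).τ_{i+j-1} = (g.τ_j) ∘_j (f.τ_i). -/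
/-- The operadic composition `f ∘ₖ g` of ℕ-indexed tuples, where `g` has arity `j`:
the entry `fₖ` is replaced by the block `(fₖg₁, …, fₖg_j)`. -/
def ncomp {G : Type*} [Group G] (f g : ℕ → G) (k j : ℕ) : ℕ → G :=
  fun l => if l < k then f l
    else if l < k + j then f k * g (l - k + 1)
    else f (l - j + 1)

/-- The action of the long cycle `τ_m = (0 1 … m)` on a tuple `f` of arity `m`
with `f₀ = π`:  `(f.τ_m)_l = π f₁⁻¹ f_{l+1}` for `l < m` and `(f.τ_m)_m = π f₁⁻¹ π`. -/
def ntau {G : Type*} [Group G] (π : G) (f : ℕ → G) (m : ℕ) : ℕ → G :=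
  fun l => if l < m then π * (f 1)⁻¹ * f (l + 1)
    else if l = m then π * (f 1)⁻¹ * π
    else f l

/-- cyclic operad axiom (ii): for `f ∈ O(i)`, `g ∈ O(j)`,
`(f ∘₁ g).τ_{i+j-1} = (g.τ_j) ∘_j (f.τ_i)` (as tuples of arity `i+j-1`). -/
theorem stmt2 {G : Type*} [Group G] (π : G) (hπ : π * π = 1) (i j : ℕ)
    (hi : 1 ≤ i) (hj : 1 ≤ j) (f g : ℕ → G) (hf : f 0 = π) (hg : g 0 = π) :
    ∀ l ≤ i + j - 1,
      ntau π (ncomp f g 1 j) (i + j - 1) l = ncomp (ntau π g j) (ntau π f i) j i l := by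
  intro l hl
  simp only [ntau, ncomp]
  have h1 : ¬ (1 : ℕ) < 1 := by omega
  have h1' : (1 : ℕ) < 1 + j := by omega
  rw [if_neg h1, if_pos h1']
  simp only [show (1:ℕ)-1+1 = 1 from rfl]
  rcases lt_or_ge l j with hlj | hlj
  · -- l < j
    rw [if_pos (show l < i + j - 1 by omega), if_pos hlj, if_pos hlj,
        if_neg (show ¬ l + 1 < 1 by omega), if_pos (show l + 1 < 1 + j by omega)]
    simp only [Nat.add_sub_cancel]
    group
  · rcases lt_or_ge l (i + j - 1) with hm | hm
    · -- j ≤ l < m, so t = l - j + 1 < i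
      rw [if_pos hm, if_neg (show ¬ l < j by omega), if_pos (show l < j + i by omega),
          if_neg (show ¬ j < j by omega), if_pos trivial,
          if_pos (show l - j + 1 < i by omega),
          if_neg (show ¬ l + 1 < 1 by omega), if_neg (show ¬ l + 1 < 1 + j by omega),
          show l + 1 - j + 1 = l - j + 1 + 1 by omega]
      rw [mul_inv_rev, show π * (g 1)⁻¹ * π * (π * (f 1)⁻¹ * f (l - j + 1 + 1))
            = π * (g 1)⁻¹ * (π * π) * (f 1)⁻¹ * f (l - j + 1 + 1) by group, hπ]
      group
    · -- l = m
      have hlm : l = i + j - 1 := by omega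
      rw [if_neg (show ¬ l < i + j - 1 by omega), if_pos hlm,
          if_neg (show ¬ l < j by omega), if_pos (show l < j + i by omega),
          if_neg (show ¬ j < j by omega), if_pos trivial,
          if_neg (show ¬ l - j + 1 < i by omega), if_pos (show l - j + 1 = i by omega)]
      rw [mul_inv_rev, show π * (g 1)⁻¹ * π * (π * (f 1)⁻¹ * π)
            = π * (g 1)⁻¹ * (π * π) * (f 1)⁻¹ * π by group, hπ]
      group
end

section
/- Let G be a group and π ∈ G with π² = 1. With notation as before (tuples with 0-th entry π, operadic compositions ∘ₖ, and cyclic action τ_m given entrywise by l ↦ π f₁⁻¹ f_{l+1} with f₀ = π), for 2 ≤ k ≤ i one has (f ∘ₖ g).τ_{i+j-1} = (f.τ_i) ∘_{k-1} g. -/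
/-- cyclic operad axiom (iii): for `f ∈ O(i)`, `g ∈ O(j)` and
`2 ≤ k ≤ i`, one has `(f ∘ₖ g).τ_{i+j-1} = (f.τ_i) ∘_{k-1} g`. -/
theorem stmt3 {G : Type*} [Group G] (π : G) (hπ : π * π = 1) (i j k : ℕ)
    (hk : 2 ≤ k) (hki : k ≤ i) (hj : 1 ≤ j)
    (f g : ℕ → G) (hf : f 0 = π) (hg : g 0 = π) :
    ∀ l ≤ i + j - 1,
      ntau π (ncomp f g k j) (i + j - 1) l = ncomp (ntau π f i) g (k - 1) j l := by
  intro l hl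
  have h1 : ncomp f g k j 1 = f 1 := by
    simp only [ncomp, if_pos (show 1 < k by omega)]
  rcases lt_or_ge l (k-1) with hA | hA
  · -- l < k - 1
    have hlt : l < i + j - 1 := by omega
    simp only [ntau, ncomp, if_pos hlt, if_pos hA, if_pos (show l < i by omega),
      if_pos (show l + 1 < k by omega), if_pos (show 1 < k by omega)]
  · rcases lt_or_ge l (k-1+j) with hB | hB
    · -- block case
      have hlt : l < i + j - 1 := by omega
      have hidx : l + 1 - k + 1 = l - (k-1) + 1 := by omega
      simp only [ntau, ncomp, if_pos hlt, if_neg (show ¬ l < k - 1 by omega),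
        if_pos (show l < k - 1 + j from hB), if_neg (show ¬ l + 1 < k by omega),
        if_pos (show l + 1 < k + j by omega), if_pos (show k - 1 < i by omega), if_pos (show 1 < k by omega),
        hidx, show k - 1 + 1 = k by omega, mul_assoc]
    · rcases lt_or_ge l (i+j-1) with hC | hC
      · -- tail case
        have hidx : l + 1 - j + 1 = l - j + 1 + 1 := by omega
        simp only [ntau, ncomp, if_pos hC, if_neg (show ¬ l < k - 1 by omega),
          if_neg (show ¬ l < k - 1 + j by omega), if_neg (show ¬ l + 1 < k by omega),
          if_neg (show ¬ l + 1 < k + j by omega), if_pos (show l - j + 1 < i by omega),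
          if_pos (show 1 < k by omega), hidx]
      · -- l = i + j - 1
        have hl' : l = i + j - 1 := by omega
        have hji : l - j + 1 = i := by omega
        simp only [ntau, ncomp, if_neg (show ¬ l < i + j - 1 by omega), if_pos hl',
          if_neg (show ¬ l < k - 1 by omega), if_neg (show ¬ l < k - 1 + j by omega),
          hji, if_neg (lt_irrefl i), if_pos rfl, if_pos (show 1 < k by omega), if_true]
end

section
/- Let G be a group, π ∈ G with π² = 1, and equip the collection O(j) = {π} × G^j with: (a) the operadic compositions ∘ₖ, (b) the right Σ⁺_j-action (f.σ)_i = π f_{σ(0)}⁻¹ f_{σ(i)} (f₀ := π). Then all three cyclic-operad axioms hold simultaneously: (i) the identity (π,1) ∈ O(1) is fixed by τ₁; (ii) (f ∘₁ g).τ_{i+j−1} = (g.τ_j) ∘_j (f.τ_i) for f ∈ O(i), g ∈ O(j); (iii) (f ∘ₖ g).τ_{i+j−1} = (f.τ_i) ∘_{k−1} g for 2 ≤ k ≤ i. Hence O is a cyclic operad in Set. -/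
lemma ncomp_lo {G : Type*} [Group G] (f g : ℕ → G) (k j l : ℕ) (h : l < k) :
    ncomp f g k j l = f l := if_pos h

lemma ncomp_mid {G : Type*} [Group G] (f g : ℕ → G) (k j l : ℕ)
    (h1 : ¬ l < k) (h2 : l < k + j) :
    ncomp f g k j l = f k * g (l - k + 1) := by
  unfold ncomp; rw [if_neg h1, if_pos h2]

lemma ncomp_hi {G : Type*} [Group G] (f g : ℕ → G) (k j l : ℕ)
    (h1 : ¬ l < k) (h2 : ¬ l < k + j) :
    ncomp f g k j l = f (l - j + 1) := by
  unfold ncomp; rw [if_neg h1, if_neg h2]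

lemma ntau_lt {G : Type*} [Group G] (π : G) (f : ℕ → G) (m l : ℕ) (h : l < m) :
    ntau π f m l = π * (f 1)⁻¹ * f (l + 1) := if_pos h

lemma ntau_eq {G : Type*} [Group G] (π : G) (f : ℕ → G) (m : ℕ) :
    ntau π f m m = π * (f 1)⁻¹ * π := by
  unfold ntau; rw [if_neg (lt_irrefl m), if_pos rfl]

/-- all three cyclic-operad axioms hold simultaneously for the
collection `O(j) = {π} × G^j` with the compositions `∘ₖ` and the cyclic actions
`τ_m`:
(i) the identity `(π, 1) ∈ O(1)` is fixed by `τ₁`;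
(ii) `(f ∘₁ g).τ_{i+j-1} = (g.τ_j) ∘_j (f.τ_i)`;
(iii) `(f ∘ₖ g).τ_{i+j-1} = (f.τ_i) ∘_{k-1} g` for `2 ≤ k ≤ i`. -/
theorem stmt14 {G : Type*} [Group G] (π : G) (hπ : π * π = 1) :
    (∀ e : ℕ → G, e 0 = π → e 1 = 1 → ∀ l ≤ 1, ntau π e 1 l = e l) ∧
    (∀ i j : ℕ, 1 ≤ i → 1 ≤ j → ∀ f g : ℕ → G, f 0 = π → g 0 = π →
      ∀ l ≤ i + j - 1,
        ntau π (ncomp f g 1 j) (i + j - 1) l = ncomp (ntau π g j) (ntau π f i) j i l) ∧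
    (∀ i j k : ℕ, 2 ≤ k → k ≤ i → 1 ≤ j → ∀ f g : ℕ → G, f 0 = π → g 0 = π →
      ∀ l ≤ i + j - 1,
        ntau π (ncomp f g k j) (i + j - 1) l = ncomp (ntau π f i) g (k - 1) j l) := by
  have lcan : ∀ a b : G, a * π * (π * b) = a * b := by
    intro a b
    rw [mul_assoc, ← mul_assoc π π, hπ, one_mul]
  refine ⟨?_, ?_, ?_⟩
  · -- Part (i)
    intro e he0 he1 l hl
    interval_cases l
    · rw [ntau_lt π e 1 0 (by omega), he1, he0]
      group
    · rw [ntau_eq, he1]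
      rw [inv_one, mul_one, hπ]
  · -- Part (ii)
    intro i j hi hj f g hf hg l hl
    have e1 : ncomp f g 1 j 1 = f 1 * g 1 := by
      rw [ncomp_mid f g 1 j 1 (by omega) (by omega)]
    rcases lt_or_ge l (i + j - 1) with h | h
    · rw [ntau_lt _ _ _ _ h, e1]
      rcases lt_or_ge l j with h2 | h2
      · -- l < j
        rw [ncomp_mid f g 1 j (l + 1) (by omega) (by omega),
          ncomp_lo _ _ j i l h2, ntau_lt π g j l h2,
          show l + 1 - 1 + 1 = l + 1 by omega]
        group
      · -- j ≤ l < i + j - 1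
        rw [ncomp_hi f g 1 j (l + 1) (by omega) (by omega),
          ncomp_mid _ _ j i l (by omega) (by omega),
          ntau_eq, ntau_lt π f i (l - j + 1) (by omega),
          show l + 1 - j + 1 = l - j + 1 + 1 by omega,
          mul_assoc π (f 1)⁻¹ (f (l - j + 1 + 1)), lcan]
        group
    · -- l = i + j - 1
      have hl' : l = i + j - 1 := by omega
      subst hl'
      rw [ntau_eq, e1,
        ncomp_mid _ _ j i _ (by omega) (by omega),
        ntau_eq, show i + j - 1 - j + 1 = i by omega, ntau_eq,
        mul_assoc π (f 1)⁻¹ π, lcan]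
      group
  · -- Part (iii)
    intro i j k hk2 hki hj f g hf hg l hl
    have e1 : ncomp f g k j 1 = f 1 := ncomp_lo f g k j 1 (by omega)
    rcases lt_or_ge l (i + j - 1) with h | h
    · rw [ntau_lt _ _ _ _ h, e1]
      rcases lt_or_ge l (k - 1) with h2 | h2
      · -- l < k - 1
        rw [ncomp_lo f g k j (l + 1) (by omega),
          ncomp_lo _ _ (k - 1) j l h2, ntau_lt π f i l (by omega)]
      · rcases lt_or_ge l (k - 1 + j) with h3 | h3
        · -- k - 1 ≤ l < k - 1 + j
          rw [ncomp_mid f g k j (l + 1) (by omega) (by omega),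
            ncomp_mid _ _ (k - 1) j l (by omega) h3,
            ntau_lt π f i (k - 1) (by omega),
            show k - 1 + 1 = k by omega,
            show l + 1 - k + 1 = l - (k - 1) + 1 by omega]
          group
        · -- k - 1 + j ≤ l < i + j - 1
          rw [ncomp_hi f g k j (l + 1) (by omega) (by omega),
            ncomp_hi _ _ (k - 1) j l (by omega) (by omega),
            ntau_lt π f i (l - j + 1) (by omega),
            show l + 1 - j + 1 = l - j + 1 + 1 by omega]
    · -- l = i + j - 1
      have hl' : l = i + j - 1 := by omega
      subst hl'
      rw [ntau_eq, e1,
        ncomp_hi _ _ (k - 1) j _ (by omega) (by omega),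
        show i + j - 1 - j + 1 = i by omega, ntau_eq]
end
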